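/- Fix 0 < C < 7/9 and let L ⊂ (0,∞)^n be the set of points r with some coordinate r_i in (1/3, 2/3) and all coordinates r_j > 1/3. Then for all sufficiently large b (uniformly in θ ∈ T^n), Q^b[2](r,θ) = ∑ k_i(θ)(r_i − 2)² + b∑_{p≠q}(r_p − r_q)² > 1 + C for all r ∈ L. -/

import Mathlib

noncomputable section

/-- The `n`-torus `T^n`. -/
abbrev Torus (n : ℕ) : Type := Fin n → AddCircle (1 : ℝ)

/-- `Q^b[2](r,θ) = ∑ᵢ kᵢ(θ)(rᵢ − 2)² + b ∑_{p≠q} (r_p − r_q)²`. -/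
def Qb2 (n : ℕ) (k : Fin n → Torus n → ℝ) (b : ℝ)
    (r : Fin n → ℝ) (θ : Torus n) : ℝ :=
  ∑ i, k i θ * (r i - 2) ^ 2 +
    b * ∑ p, ∑ q, if p ≠ q then (r p - r q) ^ 2 else 0

/-- Per-coordinate estimate: the cross term plus the coupling term is at least `-δ`. -/
lemma perj (M δ b kj rj ri : ℝ) (hM0 : 0 ≤ M) (hkj : |kj| ≤ M) (hδ : 0 < δ)
    (hb : M + 25 * M ^ 2 / (9 * δ) ≤ b) (hri1 : 1 / 3 < ri) (hri2 : ri < 2 / 3) :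
    -δ ≤ kj * ((rj - 2) ^ 2 - (ri - 2) ^ 2) + b * (rj - ri) ^ 2 := by
  obtain ⟨d, hd⟩ : ∃ d : ℝ, d = rj - ri := ⟨_, rfl⟩
  rw [← hd]
  have ht : |(rj - 2) ^ 2 - (ri - 2) ^ 2| ≤ d ^ 2 + (10 / 3) * |d| := by
    have he : (rj - 2) ^ 2 - (ri - 2) ^ 2 = d * (d + (2 * ri - 4)) := by
      rw [hd]; ring
    rw [he, abs_mul]
    have h2 : |d + (2 * ri - 4)| ≤ |d| + 10 / 3 := by
      have h3 : |2 * ri - 4| ≤ 10 / 3 := abs_le.mpr ⟨by linarith, by linarith⟩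
      calc |d + (2 * ri - 4)| ≤ |d| + |2 * ri - 4| := abs_add_le _ _
        _ ≤ |d| + 10 / 3 := by linarith
    nlinarith [abs_nonneg d, sq_abs d]
  have h1 : -(M * (d ^ 2 + (10 / 3) * |d|)) ≤ kj * ((rj - 2) ^ 2 - (ri - 2) ^ 2) := by
    have := neg_abs_le (kj * ((rj - 2) ^ 2 - (ri - 2) ^ 2))
    rw [abs_mul] at this
    nlinarith [abs_nonneg kj, abs_nonneg ((rj - 2) ^ 2 - (ri - 2) ^ 2)]
  have hc : (25 * M ^ 2 / (9 * δ)) * (9 * δ) = 25 * M ^ 2 := by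
    field_simp
  have hbd : (M + 25 * M ^ 2 / (9 * δ)) * d ^ 2 ≤ b * d ^ 2 :=
    mul_le_mul_of_nonneg_right hb (sq_nonneg d)
  have hkey : (10 / 3) * M * |d| ≤ (25 * M ^ 2 / (9 * δ)) * d ^ 2 + δ := by
    have h9 : (0:ℝ) < 9 * δ := by linarith
    rw [← mul_le_mul_iff_of_pos_right h9]
    have hc2 : (25 * M ^ 2 / (9 * δ)) * d ^ 2 * (9 * δ) = 25 * M ^ 2 * d ^ 2 := by
      field_simp
    have hdd : M ^ 2 * |d| ^ 2 = M ^ 2 * d ^ 2 := by rw [sq_abs]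
    nlinarith [sq_nonneg (5 * M * |d| - 3 * δ), hc2, hdd]
  nlinarith [h1, hbd, hkey, sq_nonneg d, abs_nonneg d, mul_nonneg hM0 (abs_nonneg d)]

/-- Fix `0 < C < 7/9` and let `L` be the set of `r ∈ (0,∞)^n` with all
coordinates `> 1/3` and some coordinate in `(1/3, 2/3)`. Then for all
sufficiently large `b`, uniformly in `θ ∈ T^n`, `Q^b[2] > 1 + C` on `L`. -/
theorem Qb2_large_on_L (n : ℕ) (hn : 0 < n)
    (k : Fin n → Torus n → ℝ) (hk : ∀ i, Continuous (k i))
    (hsum : ∀ θ, ∑ i, k i θ = 1)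
    (C : ℝ) (hC0 : 0 < C) (hC : C < 7 / 9) :
    ∃ b₀ : ℝ, ∀ b ≥ b₀, ∀ θ : Torus n, ∀ r : Fin n → ℝ,
      (∀ j, 1 / 3 < r j) → (∃ i, r i < 2 / 3) →
      1 + C < Qb2 n k b r θ := by
  -- a uniform bound M on |k i θ|
  have hbnd : ∀ i : Fin n, ∃ Mi : ℝ, ∀ θ, |k i θ| ≤ Mi := by
    intro i
    obtain ⟨Mi, hMi⟩ := (isCompact_range ((hk i).abs)).bddAbove
    exact ⟨Mi, fun θ => hMi ⟨θ, rfl⟩⟩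
  choose Ms hMs using hbnd
  set M : ℝ := ∑ i, |Ms i| with hMdef
  have hM0 : 0 ≤ M := Finset.sum_nonneg fun i _ => abs_nonneg _
  have hM : ∀ i θ, |k i θ| ≤ M := by
    intro i θ
    calc |k i θ| ≤ Ms i := hMs i θ
      _ ≤ |Ms i| := le_abs_self _
      _ ≤ M := Finset.single_le_sum (f := fun j => |Ms j|)
            (fun j _ => abs_nonneg _) (Finset.mem_univ i)
  set δ : ℝ := (7 / 9 - C) / n with hδdef
  have hnR : (0:ℝ) < n := by exact_mod_cast hn
  have hδ : 0 < δ := by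
    apply div_pos (by linarith) hnR
  refine ⟨M + 25 * M ^ 2 / (9 * δ), fun b hb θ r hr ⟨i, hi⟩ => ?_⟩
  have hb0 : 0 ≤ b := le_trans (by positivity) hb
  -- rewrite first sum
  have hsplit : ∑ j, k j θ * (r j - 2) ^ 2
      = (r i - 2) ^ 2 + ∑ j, k j θ * ((r j - 2) ^ 2 - (r i - 2) ^ 2) := by
    have : ∀ j : Fin n, k j θ * (r j - 2) ^ 2
        = k j θ * (r i - 2) ^ 2 + k j θ * ((r j - 2) ^ 2 - (r i - 2) ^ 2) := by
      intro j; ring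
    rw [Finset.sum_congr rfl fun j _ => this j, Finset.sum_add_distrib,
      ← Finset.sum_mul, hsum θ, one_mul]
  -- lower bound on the coupling sum
  have hS : ∑ j, (r j - r i) ^ 2
      ≤ ∑ p, ∑ q, if p ≠ q then (r p - r q) ^ 2 else 0 := by
    have h1 : ∀ p : Fin n, (if p ≠ i then (r p - r i) ^ 2 else 0)
        ≤ ∑ q, if p ≠ q then (r p - r q) ^ 2 else 0 := by
      intro p
      exact Finset.single_le_sum
        (f := fun q => if p ≠ q then (r p - r q) ^ 2 else 0)
        (fun q _ => by positivity) (Finset.mem_univ i)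
    calc ∑ j, (r j - r i) ^ 2
        = ∑ j, (if j ≠ i then (r j - r i) ^ 2 else 0) := by
          refine Finset.sum_congr rfl fun j _ => ?_
          by_cases h : j = i
          · simp [h]
          · simp [h]
      _ ≤ _ := Finset.sum_le_sum fun p _ => h1 p
  -- per-term estimate
  have hterm : ∀ j : Fin n, -δ ≤ k j θ * ((r j - 2) ^ 2 - (r i - 2) ^ 2)
      + b * (r j - r i) ^ 2 :=
    fun j => perj M δ b (k j θ) (r j) (r i) hM0 (hM j θ) hδ hb (hr i) hi
  have hsum2 : (n : ℝ) * (-δ)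
      ≤ ∑ j, (k j θ * ((r j - 2) ^ 2 - (r i - 2) ^ 2) + b * (r j - r i) ^ 2) := by
    calc (n : ℝ) * (-δ) = ∑ _j : Fin n, (-δ) := by
          rw [Finset.sum_const, Finset.card_univ, Fintype.card_fin, nsmul_eq_mul]
      _ ≤ _ := Finset.sum_le_sum fun j _ => hterm j
  have hQ : Qb2 n k b r θ
      ≥ (r i - 2) ^ 2 + (n : ℝ) * (-δ) := by
    unfold Qb2
    rw [hsplit]
    have hbS : b * ∑ j, (r j - r i) ^ 2
        ≤ b * ∑ p, ∑ q, if p ≠ q then (r p - r q) ^ 2 else 0 :=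
      mul_le_mul_of_nonneg_left hS hb0
    have : ∑ j, (k j θ * ((r j - 2) ^ 2 - (r i - 2) ^ 2) + b * (r j - r i) ^ 2)
        = ∑ j, k j θ * ((r j - 2) ^ 2 - (r i - 2) ^ 2)
          + b * ∑ j, (r j - r i) ^ 2 := by
      rw [Finset.sum_add_distrib, Finset.mul_sum]
    rw [this] at hsum2
    linarith
  have hnδ : (n : ℝ) * δ = 7 / 9 - C := by
    rw [hδdef]; field_simp
  have hri : (16 : ℝ) / 9 < (r i - 2) ^ 2 := by nlinarith [hr i, hi]
  have : (n:ℝ) * (-δ) = -(7/9 - C) := by rw [mul_neg, hnδ]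
  rw [this] at hQ
  linarith
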